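/- Let n ≥ 2 be an integer with v = ⌊√n⌋, and let (a_0, b_0), (a_1, b_1), (a_2, b_2) be sides of dF_v such that a_1(a_0 + b_0) + b_1 b_0 = n and a_2(a_1 + b_1) + b_2 b_1 = n. Then either all three pairs are equal to (a_0, b_0), or the three pairs are pairwise distinct and form an n-Farey triple. -/
import Mathlib


/-- An `n`-Farey triple: three pairwise distinct pairs `(aᵢ, bᵢ)` of coprime positive
integers with `a_{i+1} (aᵢ + bᵢ) + b_{i+1} bᵢ = n` for each `i` (indices mod 3). -/
def IsFareyTriple (n : ℕ) (P : Fin 3 → ℕ × ℕ) : Prop :=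
  (∀ i, 0 < (P i).1 ∧ 0 < (P i).2 ∧ Nat.Coprime (P i).1 (P i).2) ∧
  Function.Injective P ∧
  ∀ i : Fin 3, (P (i + 1)).1 * ((P i).1 + (P i).2) + (P (i + 1)).2 * (P i).2 = n

/-- `(a, b)` is a side of `dF_v`: `a, b` are coprime positive integers with `a, b ≤ v` and
`a + b > v` (i.e. `a, b` are the denominators of two consecutive fractions in the Farey
sequence of order `v`). -/
def IsSide (v a b : ℕ) : Prop :=
  0 < a ∧ 0 < b ∧ Nat.Coprime a b ∧ a ≤ v ∧ b ≤ v ∧ v < a + b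

/-- **Lemma.** Let `n ≥ 2`, `v = ⌊√n⌋`, and let `(a₀, b₀), (a₁, b₁), (a₂, b₂)` be sides of
`dF_v` with `a₁ (a₀ + b₀) + b₁ b₀ = n` and `a₂ (a₁ + b₁) + b₂ b₁ = n`. Then either all three
pairs equal `(a₀, b₀)`, or they are pairwise distinct and form an `n`-Farey triple. -/
theorem stmt11 (n : ℕ) (hn : 2 ≤ n) (a₀ b₀ a₁ b₁ a₂ b₂ : ℕ)
    (h₀ : IsSide (Nat.sqrt n) a₀ b₀)
    (h₁ : IsSide (Nat.sqrt n) a₁ b₁)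
    (h₂ : IsSide (Nat.sqrt n) a₂ b₂)
    (heq₀ : a₁ * (a₀ + b₀) + b₁ * b₀ = n)
    (heq₁ : a₂ * (a₁ + b₁) + b₂ * b₁ = n) :
    ((a₁, b₁) = (a₀, b₀) ∧ (a₂, b₂) = (a₀, b₀)) ∨
      IsFareyTriple n ![(a₀, b₀), (a₁, b₁), (a₂, b₂)] := by
  obtain ⟨ha₀, hb₀, hcop₀, ha₀v, hb₀v, hv₀⟩ := h₀
  obtain ⟨ha₁, hb₁, hcop₁, ha₁v, hb₁v, hv₁⟩ := h₁
  obtain ⟨ha₂, hb₂, hcop₂, ha₂v, hb₂v, hv₂⟩ := h₂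
  set v := Nat.sqrt n with hv
  -- the key identity
  have hid : b₁ * (b₂ + a₀) + a₂ * (a₁ + b₁) = (a₁ + b₁) * (a₀ + b₀) := by
    calc b₁ * (b₂ + a₀) + a₂ * (a₁ + b₁)
        = (a₂ * (a₁ + b₁) + b₂ * b₁) + a₀ * b₁ := by ring
      _ = n + a₀ * b₁ := by rw [heq₁]
      _ = (a₁ * (a₀ + b₀) + b₁ * b₀) + a₀ * b₁ := by rw [heq₀]
      _ = (a₁ + b₁) * (a₀ + b₀) := by ring
  have hcopc : Nat.Coprime b₁ (a₁ + b₁) := by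
    simpa [Nat.coprime_add_self_right] using hcop₁.symm
  have hdvdm : (a₁ + b₁) ∣ b₁ * (b₂ + a₀) := by
    have h1 : (a₁ + b₁) ∣ (a₁ + b₁) * (a₀ + b₀) := Dvd.intro _ rfl
    have h2 : (a₁ + b₁) ∣ a₂ * (a₁ + b₁) := Dvd.intro_left _ rfl
    have h3 : b₁ * (b₂ + a₀) = (a₁ + b₁) * (a₀ + b₀) - a₂ * (a₁ + b₁) := by omega
    rw [h3]; exact Nat.dvd_sub h1 h2
  have hdvd : (a₁ + b₁) ∣ b₂ + a₀ := hcopc.symm.dvd_of_dvd_mul_left hdvdm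
  have key2 : b₂ + a₀ = a₁ + b₁ := by
    have hle : a₁ + b₁ ≤ b₂ + a₀ := Nat.le_of_dvd (by omega) hdvd
    have hdvd' : a₁ + b₁ ∣ (b₂ + a₀) - (a₁ + b₁) := Nat.dvd_sub hdvd dvd_rfl
    have hz : (b₂ + a₀) - (a₁ + b₁) = 0 :=
      Nat.eq_zero_of_dvd_of_lt hdvd' (by omega)
    omega
  have key1 : a₂ + b₁ = a₀ + b₀ := by
    have h4 : (a₁ + b₁) * (a₂ + b₁) = (a₁ + b₁) * (a₀ + b₀) := by
      calc (a₁ + b₁) * (a₂ + b₁)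
          = a₂ * (a₁ + b₁) + (a₁ + b₁) * b₁ := by ring
        _ = a₂ * (a₁ + b₁) + (b₂ + a₀) * b₁ := by rw [key2]
        _ = b₁ * (b₂ + a₀) + a₂ * (a₁ + b₁) := by ring
        _ = (a₁ + b₁) * (a₀ + b₀) := hid
    exact Nat.eq_of_mul_eq_mul_left (by omega) h4
  have heq₂ : a₀ * (a₂ + b₂) + b₀ * b₂ = n := by
    zify at heq₀ key1 key2 ⊢
    linear_combination heq₀ + (a₀ : ℤ) * key1 + ((a₀ : ℤ) + b₀) * key2
  by_cases h : a₁ = a₀ ∧ b₁ = b₀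
  · left
    refine ⟨by simp [Prod.ext_iff]; omega, by simp [Prod.ext_iff]; omega⟩
  · right
    refine ⟨?_, ?_, ?_⟩
    · intro i
      fin_cases i <;> simp <;> exact ⟨by omega, by omega, by assumption⟩
    · intro i j hij
      fin_cases i <;> fin_cases j <;>
        first
          | rfl
          | (exfalso; simp [Prod.ext_iff] at hij; omega)
    · intro i
      fin_cases i <;> simp <;> omega
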